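/- Every complete multipartite graph with at least three partite sets is DP-good. -/

import Mathlib

open SimpleGraph

attribute [local instance] Classical.propDecidable

universe u
variable {V : Type u}

/-- `H` (on vertex set `V × Fin m`) is an `m`-fold cover of `G`. -/
def IsCover (G : SimpleGraph V) (m : ℕ) (H : SimpleGraph (V × Fin m)) : Prop :=
  (∀ (u : V) (i j : Fin m), i ≠ j → H.Adj (u, i) (u, j)) ∧
  (∀ (u v : V) (i j : Fin m), u ≠ v → H.Adj (u, i) (v, j) → G.Adj u v) ∧
  (∀ (u v : V) (i j j' : Fin m), u ≠ v → H.Adj (u, i) (v, j) → H.Adj (u, i) (v, j') → j = j')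

/-- A full cover: every matching between fibers over an edge is perfect. -/
def IsFullCover (G : SimpleGraph V) (m : ℕ) (H : SimpleGraph (V × Fin m)) : Prop :=
  IsCover G m H ∧ ∀ u v : V, G.Adj u v → ∀ i : Fin m, ∃ j : Fin m, H.Adj (u, i) (v, j)

/-- Number of ℋ-colorings (independent transversals) of a cover graph `H`. -/
noncomputable def coverCount {m : ℕ} (H : SimpleGraph (V × Fin m)) : ℕ :=
  Nat.card {f : V → Fin m // ∀ u v : V, ¬ H.Adj (u, f u) (v, f v)}

/-- The DP color function. -/
noncomputable def PDP (G : SimpleGraph V) (m : ℕ) : ℕ :=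
  sInf {n | ∃ H : SimpleGraph (V × Fin m), IsCover G m H ∧ n = coverCount H}

/-- Number of proper m-colorings, i.e. the chromatic polynomial evaluated at m. -/
noncomputable def properCount (G : SimpleGraph V) (m : ℕ) : ℕ :=
  Nat.card {f : V → Fin m // ∀ u v : V, G.Adj u v → f u ≠ f v}

/-- Girth of an edge: length of a shortest cycle through `e` (∞ if none). -/
noncomputable def edgeGirth (G : SimpleGraph V) (e : Sym2 V) : ℕ∞ :=
  ⨅ (a : V) (p : G.Walk a a) (_ : p.IsCycle) (_ : e ∈ p.edges), (p.length : ℕ∞)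

/-- Girth of an edge set `E₀`: length of a shortest cycle meeting `E₀` in an odd
number of edges (∞ if none). -/
noncomputable def setGirth (G : SimpleGraph V) (E₀ : Set (Sym2 V)) : ℕ∞ :=
  ⨅ (a : V) (p : G.Walk a a) (_ : p.IsCycle)
    (_ : Odd (p.edges.countP (fun e => e ∈ E₀))), (p.length : ℕ∞)

/-- The canonical cover graph `H_{G,m}`. -/
def canonicalCover (G : SimpleGraph V) (m : ℕ) : SimpleGraph (V × Fin m) where
  Adj x y := (x.1 = y.1 ∧ x.2 ≠ y.2) ∨ (G.Adj x.1 y.1 ∧ x.2 = y.2)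
  symm := by
    constructor
    rintro ⟨u, i⟩ ⟨v, j⟩ (⟨h1, h2⟩ | ⟨h1, h2⟩)
    · exact Or.inl ⟨h1.symm, h2.symm⟩
    · exact Or.inr ⟨h1.symm, h2.symm⟩
  loopless := by constructor; rintro ⟨u, i⟩ (⟨h1, h2⟩ | ⟨h1, h2⟩) <;> simp_all

/-- `D` is an orientation of the edge set `E₀`. -/
def IsOrientation (D : Set (V × V)) (E₀ : Set (Sym2 V)) : Prop :=
  (∀ x ∈ D, s(x.1, x.2) ∈ E₀) ∧
  ∀ u v : V, s(u, v) ∈ E₀ → ((u, v) ∈ D ↔ (v, u) ∉ D)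

/-- The directed edges `D` are balanced on the closed walk `p`. -/
noncomputable def BalancedOn {G : SimpleGraph V} (D : Set (V × V)) {a : V}
    (p : G.Walk a a) : Prop :=
  p.darts.countP (fun d => (d.fst, d.snd) ∈ D) =
    p.darts.countP (fun d => (d.snd, d.fst) ∈ D)

/-- A DP-good graph. -/
def DPGood [Fintype V] (G : SimpleGraph V) : Prop :=
  G.Connected ∧
  ∃ T : SimpleGraph V, T ≤ G ∧ T.IsTree ∧
    ∃ (q : ℕ) (e : Fin q → Sym2 V),
      Function.Injective e ∧
      Set.range e = G.edgeSet \ T.edgeSet ∧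
      (∀ i j : Fin q, i ≤ j → edgeGirth G (e i) ≤ edgeGirth G (e j)) ∧
      ∀ i : Fin q, ∃ g : ℕ, Odd g ∧ edgeGirth G (e i) = (g : ℕ∞) ∧
        ∃ (a : V) (C : G.Walk a a), C.IsCycle ∧ e i ∈ C.edges ∧ C.length = g ∧
          ∀ f ∈ C.edges, f ∈ T.edgeSet ∪ {e j | j ≤ i}



set_option linter.unusedSectionVars false


lemma exists_rank_enum {α : Type*} [DecidableEq α] (S : Finset α) (rk : α → ℕ)
    (hrk : ∀ x ∈ S, rk x ≤ 2) :
    ∃ (q : ℕ) (e : Fin q → α), Function.Injective e ∧ Set.range e = ↑S ∧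
      ∀ i j : Fin q, i ≤ j → rk (e i) ≤ rk (e j) := by
  classical
  set l : List α := (S.filter (fun x => rk x = 0)).toList ++
    ((S.filter (fun x => rk x = 1)).toList ++ (S.filter (fun x => rk x = 2)).toList) with hl
  have hmem : ∀ x, x ∈ l ↔ x ∈ S := by
    intro x
    rw [hl]
    simp only [List.mem_append, Finset.mem_toList, Finset.mem_filter]
    constructor
    · tauto
    · intro hx
      have := hrk x hx
      interval_cases hh : rk x <;> tauto
  have hnd : l.Nodup := by
    rw [hl, List.nodup_append, List.nodup_append]
    refine ⟨Finset.nodup_toList _, ⟨Finset.nodup_toList _, Finset.nodup_toList _, ?_⟩, ?_⟩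
    · intro x hx y hy rfl
      simp only [Finset.mem_toList, Finset.mem_filter] at hx hy
      omega
    · intro x hx y hy rfl
      simp only [List.mem_append, Finset.mem_toList, Finset.mem_filter] at hx hy
      rcases hy with hy | hy <;> omega
  have hsort : l.Pairwise (fun a b => rk a ≤ rk b) := by
    rw [hl, List.pairwise_append, List.pairwise_append]
    refine ⟨?_, ⟨?_, ?_, ?_⟩, ?_⟩ <;>
    · first
        | (refine List.pairwise_of_forall_mem_list ?_)
        | skip
      intro a ha b hb
      simp only [List.mem_append, Finset.mem_toList, Finset.mem_filter] at ha hb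
      omega
  refine ⟨l.length, l.get, List.nodup_iff_injective_get.mp hnd, ?_, ?_⟩
  · ext x
    simp only [Set.mem_range, Finset.mem_coe]
    rw [← hmem x, List.mem_iff_get]
  · intro i j hij
    rcases eq_or_lt_of_le hij with heq | hlt
    · rw [heq]
    · exact List.pairwise_iff_get.mp hsort i j hlt

section DS

variable {ι : Type} [DecidableEq ι] {W : ι → Type} [∀ i, DecidableEq (W i)]
variable (i₀ i₁ : ι) (w₀ : W i₀) (w₁ : W i₁)

def dsT (h : i₀ ≠ i₁) : SimpleGraph ((i : ι) × W i) where
  Adj x y := (x = ⟨i₀,w₀⟩ ∧ y.1 ≠ i₀) ∨ (y = ⟨i₀,w₀⟩ ∧ x.1 ≠ i₀) ∨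
    (x = ⟨i₁,w₁⟩ ∧ y.1 = i₀) ∨ (y = ⟨i₁,w₁⟩ ∧ x.1 = i₀)
  symm := by constructor; rintro x y (h | h | h | h) <;> tauto
  loopless := by
    constructor; rintro x (⟨rfl, h1⟩ | ⟨rfl, h1⟩ | ⟨rfl, h1⟩ | ⟨rfl, h1⟩) <;> simp_all

noncomputable def rnk : Sym2 ((i : ι) × W i) → ℕ :=
  Sym2.lift ⟨fun u v => (if u.1 = i₀ ∨ v.1 = i₀ then 1 else 0) +
      (if (u.1 = i₀ ∧ v.1 = i₁) ∨ (u.1 = i₁ ∧ v.1 = i₀) then 1 else 0),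
    by intro a b; dsimp only; congr 1 <;> exact if_congr (by tauto) rfl rfl⟩

variable {i₀ i₁ w₀ w₁}

omit [∀ i, DecidableEq (W i)] in
lemma rnk_le_two (e : Sym2 ((i : ι) × W i)) : rnk i₀ i₁ e ≤ 2 := by
  induction e using Sym2.ind with
  | _ u v => simp only [rnk, Sym2.lift_mk]; split_ifs <;> omega

omit [∀ i, DecidableEq (W i)] in
lemma rnk_eq0 {u v : (i : ι) × W i} (hu : u.1 ≠ i₀) (hv : v.1 ≠ i₀) :
    rnk i₀ i₁ s(u, v) = 0 := by
  simp [rnk, hu, hv]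

omit [∀ i, DecidableEq (W i)] in
lemma rnk_eq1 {u v : (i : ι) × W i} (h : i₀ ≠ i₁) (hu : u.1 = i₀) (hv : v.1 ≠ i₁) :
    rnk i₀ i₁ s(u, v) = 1 := by
  have : u.1 ≠ i₁ := by rw [hu]; exact h
  simp [rnk, hu, hv, this, h]

omit [∀ i, DecidableEq (W i)] in
lemma rnk_eq2 {u v : (i : ι) × W i} (hu : u.1 = i₀) (hv : v.1 = i₁) :
    rnk i₀ i₁ s(u, v) = 2 := by
  simp [rnk, hu, hv]

variable {h : i₀ ≠ i₁}

omit [∀ i, DecidableEq (W i)] in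
lemma cm_adj {x y : (i : ι) × W i} : (completeMultipartiteGraph W).Adj x y ↔ x.1 ≠ y.1 :=
  Iff.rfl

lemma triangle_cycle {V : Type*} {G : SimpleGraph V} {u v w : V} (huv : G.Adj u v)
    (hvw : G.Adj v w) (hwu : G.Adj w u) :
    ∃ C : G.Walk u u, C.IsCycle ∧ C.length = 3 ∧ C.edges = [s(u,v), s(v,w), s(w,u)] := by
  refine ⟨Walk.cons huv (Walk.cons hvw (Walk.cons hwu Walk.nil)), ?_, rfl, rfl⟩
  rw [Walk.cons_isCycle_iff]
  constructor
  · rw [Walk.cons_isPath_iff]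
    refine ⟨?_, ?_⟩
    · simp [Walk.isPath_def, hwu.ne]
    · simp only [Walk.support_cons, Walk.support_nil, List.mem_cons, List.not_mem_nil, or_false]
      push_neg
      exact ⟨hvw.ne, huv.ne'⟩
  · simp only [Walk.edges_cons, Walk.edges_nil, List.mem_cons, List.not_mem_nil, or_false]
    push_neg
    constructor
    · intro h
      rw [Sym2.eq_iff] at h
      rcases h with ⟨h1, -⟩ | ⟨h1, -⟩
      · exact huv.ne h1
      · exact hwu.ne h1.symm
    · intro h
      rw [Sym2.eq_iff] at h
      rcases h with ⟨h1, -⟩ | ⟨-, h2⟩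
      · exact hwu.ne h1.symm
      · exact hvw.ne h2

omit [∀ i, DecidableEq (W i)] in
lemma sigma_fst_ne {x : (i : ι) × W i} {j : ι} {w : W j} (hx : x.1 ≠ j) : x ≠ ⟨j, w⟩ :=
  fun hh => hx (congrArg Sigma.fst hh)

/-- The core triangle lemma: `v` not in part `i₀`. -/
lemma ds_triangle_core (hth : ∀ a b : ι, ∃ k, k ≠ a ∧ k ≠ b) (hne : ∀ i, Nonempty (W i))
    {u v : (i : ι) × W i} (hadj : u.1 ≠ v.1) (hv0 : v.1 ≠ i₀)
    (hnT : s(u, v) ∉ (dsT i₀ i₁ w₀ w₁ h).edgeSet) :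
    ∃ C : (completeMultipartiteGraph W).Walk u u, C.IsCycle ∧ s(u, v) ∈ C.edges ∧
      C.length = 3 ∧ ∀ f ∈ C.edges, f ∈ (dsT i₀ i₁ w₀ w₁ h).edgeSet ∨ f = s(u, v) ∨
        (f ∈ (completeMultipartiteGraph W).edgeSet \ (dsT i₀ i₁ w₀ w₁ h).edgeSet ∧
          rnk i₀ i₁ f < rnk i₀ i₁ s(u, v)) := by
  rw [mem_edgeSet] at hnT
  by_cases hu0 : u.1 = i₀
  · -- u in part i₀
    have hur : u ≠ ⟨i₀, w₀⟩ := by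
      intro hh
      exact hnT (Or.inl ⟨hh, hv0⟩)
    have hus : u.1 ≠ i₁ := by rw [hu0]; exact h
    by_cases hv1 : v.1 = i₁
    · -- rank 2 edge: use a third part
      obtain ⟨k, hk0, hk1⟩ := hth i₀ i₁
      set w : (i : ι) × W i := ⟨k, (hne k).some⟩ with hw
      have hvw : (completeMultipartiteGraph W).Adj v w := by
        rw [cm_adj, hv1]; exact fun hh => hk1 hh.symm
      have hwu : (completeMultipartiteGraph W).Adj w u := by
        rw [cm_adj, hu0]; exact hk0
      obtain ⟨C, hC, hClen, hCed⟩ := triangle_cycle (cm_adj.mpr hadj) hvw hwu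
      refine ⟨C, hC, by rw [hCed]; exact List.mem_cons_self, hClen, ?_⟩
      intro f hf
      rw [hCed] at hf
      simp only [List.mem_cons, List.not_mem_nil, or_false] at hf
      have hruv : rnk i₀ i₁ s(u, v) = 2 := rnk_eq2 hu0 hv1
      rcases hf with rfl | rfl | rfl
      · exact Or.inr (Or.inl rfl)
      · -- edge s(v, w), rank 0
        refine Or.inr (Or.inr ⟨⟨hvw, ?_⟩, ?_⟩)
        · rw [mem_edgeSet]
          rintro (⟨h1, -⟩ | ⟨h1, -⟩ | ⟨-, h1⟩ | ⟨h1, -⟩)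
          · exact (sigma_fst_ne (by rw [hv1]; exact h.symm)) h1
          · exact (sigma_fst_ne (show w.1 ≠ i₀ from hk0)) h1
          · exact hk0 h1
          · exact (sigma_fst_ne (show w.1 ≠ i₁ from hk1)) h1
        · rw [hruv, rnk_eq0 (by rw [hv1]; exact h.symm) hk0]; omega
      · -- edge s(w, u), rank 1
        refine Or.inr (Or.inr ⟨⟨hwu, ?_⟩, ?_⟩)
        · rw [mem_edgeSet]
          rintro (⟨h1, -⟩ | ⟨h1, -⟩ | ⟨h1, -⟩ | ⟨h1, -⟩)
          · exact (sigma_fst_ne (show w.1 ≠ i₀ from hk0)) h1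
          · exact hur h1
          · exact (sigma_fst_ne (show w.1 ≠ i₁ from hk1)) h1
          · exact (sigma_fst_ne hus) h1
        · rw [hruv, Sym2.eq_swap, rnk_eq1 h hu0 hk1]; omega
    · -- rank 1 edge: use s = ⟨i₁, w₁⟩
      have hvs : v ≠ ⟨i₁, w₁⟩ := sigma_fst_ne hv1
      have hvssadj : (completeMultipartiteGraph W).Adj v ⟨i₁, w₁⟩ := cm_adj.mpr hv1
      have hsu : (completeMultipartiteGraph W).Adj ⟨i₁, w₁⟩ u := by
        rw [cm_adj, hu0]; exact h.symm
      obtain ⟨C, hC, hClen, hCed⟩ := triangle_cycle (cm_adj.mpr hadj) hvssadj hsu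
      refine ⟨C, hC, by rw [hCed]; exact List.mem_cons_self, hClen, ?_⟩
      intro f hf
      rw [hCed] at hf
      simp only [List.mem_cons, List.not_mem_nil, or_false] at hf
      have hruv : rnk i₀ i₁ s(u, v) = 1 := rnk_eq1 h hu0 hv1
      rcases hf with rfl | rfl | rfl
      · exact Or.inr (Or.inl rfl)
      · -- edge s(v, s), rank 0
        refine Or.inr (Or.inr ⟨⟨hvssadj, ?_⟩, ?_⟩)
        · rw [mem_edgeSet]
          rintro (⟨h1, -⟩ | ⟨h1, -⟩ | ⟨h1, -⟩ | ⟨-, h1⟩)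
          · exact (sigma_fst_ne hv0) h1
          · exact (sigma_fst_ne (show Sigma.fst (⟨i₁, w₁⟩ : (i : ι) × W i) ≠ i₀ from h.symm)) h1
          · exact hvs h1
          · exact hv0 h1
        · rw [hruv, rnk_eq0 hv0 (show Sigma.fst (⟨i₁, w₁⟩ : (i : ι) × W i) ≠ i₀ from h.symm)]
          omega
      · -- edge s(s, u) ∈ T
        refine Or.inl ?_
        rw [mem_edgeSet]
        exact Or.inr (Or.inr (Or.inl ⟨rfl, hu0⟩))
  · -- u, v both outside part i₀: triangle via r
    have hvr : (completeMultipartiteGraph W).Adj v ⟨i₀, w₀⟩ := cm_adj.mpr hv0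
    have hru : (completeMultipartiteGraph W).Adj ⟨i₀, w₀⟩ u := by
      rw [cm_adj]; exact fun hh => hu0 hh.symm
    obtain ⟨C, hC, hClen, hCed⟩ := triangle_cycle (cm_adj.mpr hadj) hvr hru
    refine ⟨C, hC, by rw [hCed]; exact List.mem_cons_self, hClen, ?_⟩
    intro f hf
    rw [hCed] at hf
    simp only [List.mem_cons, List.not_mem_nil, or_false] at hf
    rcases hf with rfl | rfl | rfl
    · exact Or.inr (Or.inl rfl)
    · refine Or.inl ?_
      rw [mem_edgeSet]
      exact Or.inr (Or.inl ⟨rfl, hv0⟩)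
    · refine Or.inl ?_
      rw [mem_edgeSet]
      exact Or.inl ⟨rfl, hu0⟩


-- tree lemmas


lemma dsT_le : dsT i₀ i₁ w₀ w₁ h ≤ completeMultipartiteGraph W := by
  rintro x y (⟨rfl, h1⟩ | ⟨rfl, h1⟩ | ⟨rfl, h1⟩ | ⟨rfl, h1⟩) <;>
    simp only [comap_adj, top_adj] <;> simp_all [eq_comm, h, h.symm, Ne]

lemma dsT_connected : (dsT i₀ i₁ w₀ w₁ h).Connected := by
  have key : ∀ x, (dsT i₀ i₁ w₀ w₁ h).Reachable x ⟨i₀, w₀⟩ := by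
    intro x
    by_cases hx : x.1 = i₀
    · by_cases hxr : x = ⟨i₀, w₀⟩
      · rw [hxr]
      · have h1 : (dsT i₀ i₁ w₀ w₁ h).Adj x ⟨i₁, w₁⟩ := Or.inr (Or.inr (Or.inr ⟨rfl, hx⟩))
        have h2 : (dsT i₀ i₁ w₀ w₁ h).Adj ⟨i₁, w₁⟩ ⟨i₀, w₀⟩ := Or.inr (Or.inl ⟨rfl, h.symm⟩)
        exact (h1.reachable).trans h2.reachable
    · exact (Adj.reachable (Or.inr (Or.inl ⟨rfl, hx⟩)))
  rw [connected_iff]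
  exact ⟨fun x y => (key x).trans (key y).symm, ⟨⟨i₀, w₀⟩⟩⟩

lemma dsT_unique_nbr {x y z : (i : ι) × W i} (hx1 : x ≠ ⟨i₀, w₀⟩) (hx2 : x ≠ ⟨i₁, w₁⟩)
    (hy : (dsT i₀ i₁ w₀ w₁ h).Adj x y) (hz : (dsT i₀ i₁ w₀ w₁ h).Adj x z) : y = z := by
  rcases hy with ⟨h1, -⟩ | ⟨rfl, hy2⟩ | ⟨h1, -⟩ | ⟨rfl, hy2⟩
  · exact absurd h1 hx1
  · rcases hz with ⟨h1, -⟩ | ⟨rfl, -⟩ | ⟨h1, -⟩ | ⟨rfl, hz2⟩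
    · exact absurd h1 hx1
    · rfl
    · exact absurd h1 hx2
    · exact absurd hz2 hy2
  · exact absurd h1 hx2
  · rcases hz with ⟨h1, -⟩ | ⟨rfl, hz2⟩ | ⟨h1, -⟩ | ⟨rfl, -⟩
    · exact absurd h1 hx1
    · exact absurd hy2 hz2
    · exact absurd h1 hx2
    · rfl

lemma dsT_acyclic : (dsT i₀ i₁ w₀ w₁ h).IsAcyclic := by
  intro a c hc
  have hn : c.support.tail.Nodup := hc.2
  have hlen : 3 ≤ c.length := hc.three_le_length
  have hlt : c.support.tail.length = c.length := by
    rw [List.length_tail, Walk.length_support]; omega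
  have : ∃ x ∈ c.support.tail, x ≠ ⟨i₀, w₀⟩ ∧ x ≠ ⟨i₁, w₁⟩ := by
    by_contra hcon
    push_neg at hcon
    have hsub : c.support.tail.toFinset ⊆ {⟨i₀, w₀⟩, ⟨i₁, w₁⟩} := by
      intro x hx
      rw [List.mem_toFinset] at hx
      by_cases hh : x = ⟨i₀, w₀⟩
      · simp [hh]
      · simp [hcon x hx hh]
    have hcard := Finset.card_le_card hsub
    rw [List.toFinset_card_of_nodup hn, hlt] at hcard
    have h2 : ({⟨i₀, w₀⟩, ⟨i₁, w₁⟩} : Finset ((i : ι) × W i)).card ≤ 2 :=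
      (Finset.card_insert_le _ _).trans (by simp)
    omega
  obtain ⟨x, hxmem, hx1, hx2⟩ := this
  have hxs : x ∈ c.support := List.mem_of_mem_tail hxmem
  have hc'c : (c.rotate x hxs).IsCycle := hc.rotate hxs
  obtain ⟨y, hxy, p, hpe⟩ := Walk.not_nil_iff.mp hc'c.not_nil
  have hc'len : 3 ≤ (c.rotate x hxs).length := hc'c.three_le_length
  have hple : 2 ≤ p.length := by
    have := congrArg Walk.length hpe
    rw [Walk.length_cons] at this
    omega
  have hpIsPath : p.IsPath := ((Walk.cons_isCycle_iff p hxy).mp (hpe ▸ hc'c)).1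
  have hyx : y ≠ x := by
    intro hh
    subst hh
    have h0 := (Walk.isPath_iff_eq_nil (p := p)).mp hpIsPath
    subst h0
    simp at hple
  obtain ⟨z, hxz, q, hqe⟩ := Walk.exists_eq_cons_of_ne (fun hh => hyx hh.symm) p.reverse
  have hzy : z = y := dsT_unique_nbr hx1 hx2 hxz hxy
  subst hzy
  have hq : q.IsPath := by
    have hrev : p.reverse.IsPath := hpIsPath.reverse
    rw [hqe, Walk.cons_isPath_iff] at hrev
    exact hrev.1
  rw [Walk.isPath_iff_eq_nil] at hq
  subst hq
  have := congrArg Walk.length hqe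
  simp at this
  omega

lemma dsT_isTree : (dsT i₀ i₁ w₀ w₁ h).IsTree := ⟨dsT_connected, dsT_acyclic⟩


lemma edgeGirth_eq_three' {V' : Type u} {G : SimpleGraph V'} {e : Sym2 V'} {a : V'}
    {C : G.Walk a a} (hC : C.IsCycle) (he : e ∈ C.edges) (hl : C.length = 3) :
    edgeGirth G e = 3 := by
  refine le_antisymm ?_ ?_
  · calc edgeGirth G e ≤ ⨅ (_ : C.IsCycle) (_ : e ∈ C.edges), (C.length : ℕ∞) :=
          iInf_le_of_le a (iInf_le _ C)
      _ ≤ 3 := by rw [iInf_pos hC, iInf_pos he, hl]; rfl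
  · refine le_iInf fun b => le_iInf fun p => le_iInf fun hp => le_iInf fun _ => ?_
    have := hp.three_le_length
    exact_mod_cast this

end DS

/-- every complete multipartite graph with at least three (nonempty)
partite sets is DP-good. -/
theorem dpGood_completeMultipartite (ι : Type) [Fintype ι] [DecidableEq ι]
    (W : ι → Type) [∀ i, Fintype (W i)] [∀ i, DecidableEq (W i)]
    (h3 : 3 ≤ Fintype.card ι) (hne : ∀ i, Nonempty (W i)) :
    DPGood (SimpleGraph.completeMultipartiteGraph W) := by
  classical
  have hcard1 : 1 < Fintype.card ι := by omega
  obtain ⟨i₀⟩ : Nonempty ι := Fintype.card_pos_iff.mp (by omega)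
  obtain ⟨i₁, hi10⟩ := Fintype.exists_ne_of_one_lt_card hcard1 i₀
  have hI : i₀ ≠ i₁ := hi10.symm
  have hth : ∀ a b : ι, ∃ k, k ≠ a ∧ k ≠ b := by
    intro a b
    by_contra hcon
    push_neg at hcon
    have hsub : (Finset.univ : Finset ι) ⊆ {a, b} := by
      intro k _
      by_cases hk : k = a
      · simp [hk]
      · simp [hcon k hk]
    have h1 := Finset.card_le_card hsub
    rw [Finset.card_univ] at h1
    have h2 : ({a, b} : Finset ι).card ≤ 2 := (Finset.card_insert_le _ _).trans (by simp)
    omega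
  set w₀ : W i₀ := (hne i₀).some with hw₀
  set w₁ : W i₁ := (hne i₁).some with hw₁
  set G := completeMultipartiteGraph W with hG
  set T := dsT i₀ i₁ w₀ w₁ hI with hT
  have hfin : (G.edgeSet \ T.edgeSet).Finite := Set.toFinite _
  obtain ⟨q, e, hinj, hrange, hmono⟩ := exists_rank_enum hfin.toFinset (rnk i₀ i₁)
    (fun x _ => rnk_le_two x)
  have hrange' : Set.range e = G.edgeSet \ T.edgeSet := by
    rw [hrange, Set.Finite.coe_toFinset]
  have hmem : ∀ i : Fin q, e i ∈ G.edgeSet \ T.edgeSet := by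
    intro i
    rw [← hrange']
    exact ⟨i, rfl⟩
  have hmain : ∀ i : Fin q, ∃ (a : (i : ι) × W i) (C : G.Walk a a), C.IsCycle ∧
      e i ∈ C.edges ∧ C.length = 3 ∧
      ∀ f ∈ C.edges, f ∈ T.edgeSet ∪ {x | ∃ j ≤ i, e j = x} := by
    intro i
    obtain ⟨u, v, huv⟩ : ∃ u v, e i = s(u, v) :=
      Sym2.inductionOn (f := fun z => ∃ u v, z = s(u, v)) (e i) (fun x y => ⟨x, y, rfl⟩)
    obtain ⟨hiG, hiT⟩ := hmem i
    rw [huv] at hiG hiT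
    have hadj : u.1 ≠ v.1 := (mem_edgeSet _).mp hiG
    -- helper converting core conclusion
    have convert_core : ∀ (a : (i : ι) × W i) (C : G.Walk a a), C.IsCycle →
        s(u,v) ∈ C.edges → C.length = 3 →
        (∀ f ∈ C.edges, f ∈ T.edgeSet ∨ f = s(u, v) ∨
          (f ∈ G.edgeSet \ T.edgeSet ∧ rnk i₀ i₁ f < rnk i₀ i₁ s(u, v))) →
        ∃ (a : (i : ι) × W i) (C : G.Walk a a), C.IsCycle ∧ e i ∈ C.edges ∧ C.length = 3 ∧
          ∀ f ∈ C.edges, f ∈ T.edgeSet ∪ {x | ∃ j ≤ i, e j = x} := by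
      intro a C hC hCm hCl hCcond
      refine ⟨a, C, hC, by rw [huv]; exact hCm, hCl, ?_⟩
      intro f hf
      rcases hCcond f hf with h1 | h1 | ⟨h1, h2⟩
      · exact Set.mem_union_left _ h1
      · refine Set.mem_union_right _ ⟨i, le_refl i, ?_⟩
        rw [huv, h1]
      · rw [← hrange'] at h1
        obtain ⟨j, hj⟩ := h1
        refine Set.mem_union_right _ ⟨j, ?_, hj⟩
        by_contra hji
        push_neg at hji
        have := hmono i j hji.le
        rw [hj, huv] at this
        omega
    by_cases hv0 : v.1 = i₀
    · have hu0 : u.1 ≠ i₀ := by rw [← hv0]; exact hadj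
      have hiT' : s(v, u) ∉ T.edgeSet := by rw [Sym2.eq_swap]; exact hiT
      obtain ⟨C, hC, hCm, hCl, hCcond⟩ :=
        ds_triangle_core (h := hI) hth hne (Ne.symm hadj) hu0 hiT'
      refine convert_core v C hC (by rw [Sym2.eq_swap]; exact hCm) hCl ?_
      intro f hf
      rcases hCcond f hf with h1 | h1 | ⟨h1, h2⟩
      · exact Or.inl h1
      · exact Or.inr (Or.inl (by rw [h1, Sym2.eq_swap]))
      · refine Or.inr (Or.inr ⟨h1, ?_⟩)
        rw [Sym2.eq_swap] at h2
        exact h2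
    · obtain ⟨C, hC, hCm, hCl, hCcond⟩ :=
        ds_triangle_core (h := hI) hth hne hadj hv0 hiT
      exact convert_core u C hC hCm hCl hCcond
  have hgirth : ∀ i : Fin q, edgeGirth G (e i) = 3 := by
    intro i
    obtain ⟨a, C, hC, hCm, hCl, -⟩ := hmain i
    exact edgeGirth_eq_three' hC hCm hCl
  refine ⟨Connected.mono (dsT_le (w₀ := w₀) (w₁ := w₁) (h := hI)) (dsT_connected (w₀ := w₀) (w₁ := w₁) (h := hI)), T, dsT_le, dsT_isTree, q, e, hinj,
    hrange', ?_, ?_⟩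
  · intro i j _
    rw [hgirth i, hgirth j]
  · intro i
    obtain ⟨a, C, hC, hCm, hCl, hCcond⟩ := hmain i
    refine ⟨3, by decide, by exact_mod_cast hgirth i, a, C, hC, hCm, hCl, hCcond⟩
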